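/- For elementary cellular automaton Rule 105 on a ring of size n, a configuration is a fixed point of the parallel update if and only if n is a multiple of 4 and the configuration is one of the four rotations of the word (0011) repeated n/4 times. -/
import Mathlib


/-- Single-cell update: replace the state of cell `i` by the local rule applied
to its neighborhood on the ring `ZMod n`. -/
def eupdate (n : ℕ) (f : Bool → Bool → Bool → Bool) (x : ZMod n → Bool) (i : ZMod n) :
    ZMod n → Bool :=
  Function.update x i (f (x (i - 1)) (x i) (x (i + 1)))

/-- Synchronous (parallel) step. -/
def parStep (n : ℕ) (f : Bool → Bool → Bool → Bool) (x : ZMod n → Bool) : ZMod n → Bool :=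
  fun i => f (x (i - 1)) (x i) (x (i + 1))

/-- `x` is a fixed point of the parallel dynamics. -/
def IsFixedConfig (n : ℕ) (f : Bool → Bool → Bool → Bool) (x : ZMod n → Bool) : Prop :=
  ∀ i : ZMod n, f (x (i - 1)) (x i) (x (i + 1)) = x i

/-- One full sequential step under the sequential update mode `μ`
(a permutation of the cells): update cells one at a time in the order
`μ 0, μ 1, …, μ (n-1)`. -/
def seqStep (n : ℕ) (f : Bool → Bool → Bool → Bool) (μ : Fin n ≃ ZMod n)
    (x : ZMod n → Bool) : ZMod n → Bool :=
  (List.finRange n).foldl (fun y k => eupdate n f y (μ k)) x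

/-- One full sequential step under the descending order `(n-1, n-2, …, 0)`. -/
def seqStepDesc (n : ℕ) (f : Bool → Bool → Bool → Bool) (x : ZMod n → Bool) : ZMod n → Bool :=
  ((List.range n).reverse).foldl (fun y k => eupdate n f y (k : ZMod n)) x

/-- One full sequential step under the ascending order `(0, 1, …, n-1)`. -/
def seqStepAsc (n : ℕ) (f : Bool → Bool → Bool → Bool) (x : ZMod n → Bool) : ZMod n → Bool :=
  (List.range n).foldl (fun y k => eupdate n f y (k : ZMod n)) x

def rule105 : Bool → Bool → Bool → Bool
  | true, true, true => false
  | true, true, false => true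
  | true, false, true => true
  | true, false, false => false
  | false, true, true => true
  | false, true, false => false
  | false, false, true => false
  | false, false, false => true

lemma rule105_iff : ∀ a b c : Bool, (rule105 a b c = b ↔ c = !a) := by decide

lemma val_add_mod4 {n : ℕ} [NeZero n] (h4 : 4 ∣ n) (i : ZMod n) (a : ℕ) :
    (i + (a : ZMod n)).val % 4 = (i.val + a) % 4 := by
  have hva : (i + (a : ZMod n)).val = (i.val + a % n) % n := by
    rw [ZMod.val_add, ZMod.val_natCast]
  have ha : a % n % 4 = a % 4 := Nat.mod_mod_of_dvd a h4
  rw [hva, Nat.mod_mod_of_dvd _ h4, Nat.add_mod, ha, ← Nat.add_mod]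

theorem rule105_fixed_points (n : ℕ) (hn : 0 < n) (x : ZMod n → Bool) :
    IsFixedConfig n rule105 x ↔
      (4 ∣ n ∧ ∃ k < 4, ∀ i : ZMod n,
        x i = decide ((i.val + k) % 4 = 2 ∨ (i.val + k) % 4 = 3)) := by
  have hNZ : NeZero n := ⟨hn.ne'⟩
  constructor
  · intro hfix
    have h2 : ∀ i : ZMod n, x (i + 2) = ! x i := by
      intro i
      have h := (rule105_iff _ _ _).1 (hfix (i + 1))
      have e1 : i + 1 - 1 = i := by ring
      have e2 : i + 1 + 1 = i + 2 := by ring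
      rw [e1, e2] at h
      exact h
    have hiter : ∀ (m : ℕ) (i : ZMod n),
        x (i + ((2 * m : ℕ) : ZMod n)) = if m % 2 = 0 then x i else ! x i := by
      intro m
      induction m with
      | zero => intro i; simp
      | succ m ih =>
        intro i
        have e : (i + ((2 * (m + 1) : ℕ) : ZMod n)) = (i + 2) + ((2 * m : ℕ) : ZMod n) := by
          push_cast; ring
        rw [e, ih (i + 2), h2 i]
        rcases Nat.mod_two_eq_zero_or_one m with hm | hm
        · have hm1 : (m + 1) % 2 = 1 := by omega
          simp [hm, hm1]
        · have hm1 : (m + 1) % 2 = 0 := by omega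
          simp [hm, hm1]
    have heven : n % 2 = 0 := by
      by_contra hodd
      have h1 : n % 2 = 1 := by omega
      have hz : ((2 * n : ℕ) : ZMod n) = 0 := by
        push_cast [ZMod.natCast_self]; ring
      have := hiter n 0
      rw [hz, h1] at this
      simp at this
    have h4 : 4 ∣ n := by
      obtain ⟨t, ht⟩ : 2 ∣ n := by omega
      by_contra hc
      have ht1 : t % 2 = 1 := by omega
      have hz : ((2 * t : ℕ) : ZMod n) = 0 := by
        rw [← ht]; exact ZMod.natCast_self n
      have := hiter t 0
      rw [hz, ht1] at this
      simp at this
    set k : ℕ := if x 0 then (if x 1 then 2 else 3) else (if x 1 then 1 else 0) with hk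
    have hk4 : k < 4 := by rw [hk]; split_ifs <;> norm_num
    refine ⟨h4, k, hk4, ?_⟩
    have key : ∀ m : ℕ,
        (x ((m : ℕ) : ZMod n) = decide ((m + k) % 4 = 2 ∨ (m + k) % 4 = 3)) ∧
        (x ((m + 1 : ℕ) : ZMod n) = decide ((m + 1 + k) % 4 = 2 ∨ (m + 1 + k) % 4 = 3)) := by
      intro m
      induction m with
      | zero =>
        constructor
        · cases h0 : x 0 <;> cases h1 : x 1 <;> simp [hk, h0, h1]
        · cases h0 : x 0 <;> cases h1 : x 1 <;> simp [hk, h0, h1]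
      | succ m ih =>
        refine ⟨ih.2, ?_⟩
        have e : ((m + 1 + 1 : ℕ) : ZMod n) = ((m : ℕ) : ZMod n) + 2 := by
          push_cast; ring
        rw [e, h2, ih.1]
        rcases (show (m + k) % 4 = 0 ∨ (m + k) % 4 = 1 ∨ (m + k) % 4 = 2 ∨ (m + k) % 4 = 3
          by omega) with h | h | h | h
        · have hv : (m + 1 + 1 + k) % 4 = 2 := by omega
          simp [h, hv]
        · have hv : (m + 1 + 1 + k) % 4 = 3 := by omega
          simp [h, hv]
        · have hv : (m + 1 + 1 + k) % 4 = 0 := by omega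
          simp [h, hv]
        · have hv : (m + 1 + 1 + k) % 4 = 1 := by omega
          simp [h, hv]
    intro i
    have h := (key i.val).1
    rwa [ZMod.natCast_rightInverse i] at h
  · rintro ⟨h4, k, hk4, hx⟩
    intro i
    rw [rule105_iff]
    have hn4 : n % 4 = 0 := by omega
    have hp : i + 1 = i + ((1 : ℕ) : ZMod n) := by norm_num
    have hm : i - 1 = i + (((n - 1 : ℕ)) : ZMod n) := by
      have hnn : (((n - 1 : ℕ)) : ZMod n) = -1 := by
        rw [Nat.cast_sub hn, ZMod.natCast_self, Nat.cast_one]; ring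
      rw [hnn]; ring
    have v1 : (i + 1).val % 4 = (i.val + 1) % 4 := by
      rw [hp, val_add_mod4 h4]
    have v3 : (i - 1).val % 4 = (i.val + 3) % 4 := by
      rw [hm, val_add_mod4 h4]
      omega
    rw [hx (i + 1), hx (i - 1)]
    have e1 : ((i + 1).val + k) % 4 = (i.val + 1 + k) % 4 := by omega
    have e3 : ((i - 1).val + k) % 4 = (i.val + 3 + k) % 4 := by omega
    rw [e1, e3]
    rcases (show (i.val + k) % 4 = 0 ∨ (i.val + k) % 4 = 1 ∨ (i.val + k) % 4 = 2 ∨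
        (i.val + k) % 4 = 3 by omega) with h | h | h | h
    · have a1 : (i.val + 1 + k) % 4 = 1 := by omega
      have a3 : (i.val + 3 + k) % 4 = 3 := by omega
      simp [a1, a3]
    · have a1 : (i.val + 1 + k) % 4 = 2 := by omega
      have a3 : (i.val + 3 + k) % 4 = 0 := by omega
      simp [a1, a3]
    · have a1 : (i.val + 1 + k) % 4 = 3 := by omega
      have a3 : (i.val + 3 + k) % 4 = 1 := by omega
      simp [a1, a3]
    · have a1 : (i.val + 1 + k) % 4 = 0 := by omega
      have a3 : (i.val + 3 + k) % 4 = 2 := by omega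
      simp [a1, a3]
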